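/- There exists k_0 such that for every integer k ≥ k_0, setting n = ⌊(k/e)²·(π·e^{e²/2}·k³·ln k)^{1/k}⌋, the inequality n!·(1 − 1/k!)^{C(n,k)} < 1 holds. -/

import Mathlib

/-- An ordered `k`-set (`k`-tuple of distinct elements of `V`), given as an
embedding `Fin k ↪ V`, is *consistent* with a (strict) linear order `r` on `V`
if its entries are increasing with respect to `r`. -/
def Consistent {k : ℕ} {V : Type*} (r : V → V → Prop) (e : Fin k ↪ V) : Prop :=
  ∀ i j : Fin k, i < j → r (e i) (e j)

/-- An *oriented `k`-uniform hypergraph* on `V`: a family of `k`-tuples of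
distinct elements of `V` (embeddings `Fin k ↪ V`) such that no two tuples have
the same underlying `k`-element set. -/
structure OrientedHypergraph (k : ℕ) (V : Type*) where
  edges : Finset (Fin k ↪ V)
  eq_of_range_eq : ∀ e ∈ edges, ∀ f ∈ edges, Set.range ⇑e = Set.range ⇑f → e = f

/-- *Property O*: for every linear order (given by its strict order relation `r`)
on the vertex set, some edge is consistent with it. -/
def PropertyO {k : ℕ} {V : Type*} (H : OrientedHypergraph k V) : Prop :=
  ∀ r : V → V → Prop, IsStrictTotalOrder V r → ∃ e ∈ H.edges, Consistent r e

/-- A *`k`-tournament*: an oriented `k`-uniform hypergraph containing a tuple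
for every `k`-element subset of the vertex set (such a tuple is unique by
`eq_of_range_eq`). -/
def IsTournament {k : ℕ} {V : Type*} (H : OrientedHypergraph k V) : Prop :=
  ∀ S : Finset V, S.card = k → ∃ e ∈ H.edges, Set.range ⇑e = ↑S
open Real Filter Topology Finset


lemma aux_exp_le_one_sub {x : ℝ} (h0 : 0 ≤ x) (h1 : x < 1) :
    Real.exp (-(x / (1 - x))) ≤ 1 - x := by
  have h1x : 0 < 1 - x := by linarith
  have h := Real.add_one_le_exp (x / (1 - x))
  have key : 1 ≤ (1 - x) * Real.exp (x / (1 - x)) := by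
    have h2 : (1 - x) * (x / (1 - x) + 1) = 1 := by field_simp; ring
    nlinarith [Real.exp_pos (x / (1 - x))]
  rw [Real.exp_neg]
  have hep := Real.exp_pos (x / (1 - x))
  rw [inv_le_iff_one_le_mul₀ hep]
  nlinarith

lemma aux_factorial_le {k : ℕ} (hk : 1 ≤ k) :
    (k.factorial : ℝ) ≤ Real.exp 1 * Real.sqrt k * ((k : ℝ) / Real.exp 1) ^ k := by
  have h1 : Stirling.stirlingSeq k ≤ Stirling.stirlingSeq 1 := by
    have := Stirling.stirlingSeq'_antitone (Nat.zero_le (k - 1))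
    simpa [Nat.succ_sub_one, Nat.sub_add_cancel hk] using this
  rw [Stirling.stirlingSeq_one] at h1
  have hd : (0:ℝ) < Real.sqrt (2 * k) * ((k : ℝ) / Real.exp 1) ^ k := by
    have : (0:ℝ) < (k:ℝ) := by exact_mod_cast hk
    positivity
  have hdef : (k.factorial : ℝ) = Stirling.stirlingSeq k * (Real.sqrt (2 * k) * ((k : ℝ) / Real.exp 1) ^ k) := by
    rw [Stirling.stirlingSeq]; field_simp
  rw [hdef]
  have hs : Real.sqrt (2 * (k:ℝ)) = Real.sqrt 2 * Real.sqrt k := Real.sqrt_mul (by norm_num) _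
  calc Stirling.stirlingSeq k * (Real.sqrt (2 * k) * ((k : ℝ) / Real.exp 1) ^ k)
      ≤ (Real.exp 1 / Real.sqrt 2) * (Real.sqrt (2 * k) * ((k : ℝ) / Real.exp 1) ^ k) :=
        mul_le_mul_of_nonneg_right h1 hd.le
    _ = Real.exp 1 * Real.sqrt k * ((k : ℝ) / Real.exp 1) ^ k := by
        rw [hs]
        have h2 : Real.sqrt 2 ≠ 0 := by positivity
        field_simp

noncomputable def gfun (k : ℕ) : ℝ :=
  Real.pi * Real.exp (Real.exp 1 ^ 2 / 2) * (k : ℝ) ^ 3 * Real.log k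

noncomputable def mfun (k : ℕ) : ℝ :=
  ((k : ℝ) / Real.exp 1) ^ 2 * gfun k ^ (1 / (k : ℝ))

lemma one_le_gfun {k : ℕ} (hk : 3 ≤ k) : 1 ≤ gfun k := by
  have hk3 : (3:ℝ) ≤ (k:ℝ) := by exact_mod_cast hk
  have hlog : 1 ≤ Real.log k := by
    rw [Real.le_log_iff_exp_le (by linarith)]
    calc Real.exp 1 ≤ 2.7182818286 := Real.exp_one_lt_d9.le
      _ ≤ (k:ℝ) := by linarith
  have hpi : 1 ≤ Real.pi := by linarith [Real.pi_gt_three]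
  have hexp : 1 ≤ Real.exp (Real.exp 1 ^ 2 / 2) := Real.one_le_exp (by positivity)
  have hk1 : 1 ≤ (k:ℝ)^3 := one_le_pow₀ (by linarith)
  have hA : 1 ≤ Real.pi * Real.exp (Real.exp 1 ^ 2 / 2) := by nlinarith
  have hB : 1 ≤ Real.pi * Real.exp (Real.exp 1 ^ 2 / 2) * (k:ℝ)^3 := by nlinarith
  unfold gfun
  nlinarith

lemma tendsto_log_div_nat : Tendsto (fun k : ℕ => Real.log k / (k:ℝ)) atTop (𝓝 0) := by
  have h := Real.isLittleO_log_id_atTop.tendsto_div_nhds_zero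
  have h2 := h.comp (tendsto_natCast_atTop_atTop (R := ℝ))
  exact h2

lemma tendsto_loggfun_div : Tendsto (fun k : ℕ => Real.log (gfun k) / (k:ℝ)) atTop (𝓝 0) := by
  have hub : Tendsto (fun k : ℕ => (Real.log (Real.pi * Real.exp (Real.exp 1 ^ 2 / 2)) + 4 * Real.log k) / (k:ℝ)) atTop (𝓝 0) := by
    have h1 : Tendsto (fun k : ℕ => Real.log (Real.pi * Real.exp (Real.exp 1 ^ 2 / 2)) / (k:ℝ)) atTop (𝓝 0) :=
      tendsto_const_nhds.div_atTop (tendsto_natCast_atTop_atTop (R := ℝ))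
    have h2 := tendsto_log_div_nat.const_mul (4:ℝ)
    have h3 := h1.add h2
    simp only [mul_zero, add_zero] at h3
    apply h3.congr
    intro k; ring
  apply tendsto_of_tendsto_of_tendsto_of_le_of_le' tendsto_const_nhds hub
  · filter_upwards [eventually_ge_atTop 3] with k hk
    have hg := one_le_gfun hk
    have hkpos : (0:ℝ) < k := by positivity
    exact div_nonneg (Real.log_nonneg hg) hkpos.le
  · filter_upwards [eventually_ge_atTop 3] with k hk
    have hk3 : (3:ℝ) ≤ (k:ℝ) := by exact_mod_cast hk
    have hkpos : (0:ℝ) < k := by linarith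
    have hgle : gfun k ≤ Real.pi * Real.exp (Real.exp 1 ^ 2 / 2) * (k:ℝ)^4 := by
      unfold gfun
      have hlog : Real.log k ≤ (k:ℝ) := Real.log_le_self hkpos.le
      have hp : (0:ℝ) < Real.pi * Real.exp (Real.exp 1 ^ 2 / 2) * (k:ℝ)^3 := by positivity
      nlinarith
    have hg1 := one_le_gfun hk
    have hlogle : Real.log (gfun k) ≤ Real.log (Real.pi * Real.exp (Real.exp 1 ^ 2 / 2)) + 4 * Real.log k := by
      calc Real.log (gfun k) ≤ Real.log (Real.pi * Real.exp (Real.exp 1 ^ 2 / 2) * (k:ℝ)^4) :=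
            Real.log_le_log (by linarith) hgle
        _ = Real.log (Real.pi * Real.exp (Real.exp 1 ^ 2 / 2)) + 4 * Real.log k := by
            rw [Real.log_mul (by positivity) (by positivity), Real.log_pow]
            push_cast; ring
    gcongr

noncomputable def ebarfun (k : ℕ) : ℝ :=
  (k:ℝ)^2 / (2 * ((k:ℝ)^2 / Real.exp 1 ^ 2 - 1)) + 136 / (k:ℝ)


lemma tendsto_lognat_atTop : Tendsto (fun k : ℕ => Real.log k) atTop atTop :=
  Real.tendsto_log_atTop.comp (tendsto_natCast_atTop_atTop (R := ℝ))

lemma tendsto_mfun_ratio :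
    Tendsto (fun k : ℕ => mfun k * Real.log (mfun k) / ((k:ℝ)^2 * Real.log k)) atTop
      (𝓝 (2 / Real.exp 1 ^ 2)) := by
  have hX : Tendsto (fun k : ℕ => Real.exp (Real.log (gfun k) / (k:ℝ))) atTop (𝓝 1) := by
    have := (Real.continuous_exp.tendsto 0).comp tendsto_loggfun_div
    simpa [Function.comp_def] using this
  have h2 : Tendsto (fun k : ℕ => 2 / Real.log k) atTop (𝓝 0) :=
    tendsto_const_nhds.div_atTop tendsto_lognat_atTop
  have h3 : Tendsto (fun k : ℕ => Real.log (gfun k) / (k:ℝ) / Real.log k) atTop (𝓝 0) := by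
    have := tendsto_loggfun_div.mul (tendsto_inv_atTop_zero.comp tendsto_lognat_atTop)
    simpa [div_eq_mul_inv, Function.comp] using this
  have hF : Tendsto (fun k : ℕ => Real.exp (Real.log (gfun k) / (k:ℝ)) / Real.exp 1 ^ 2 *
      (2 - 2 / Real.log k + Real.log (gfun k) / (k:ℝ) / Real.log k)) atTop
      (𝓝 (1 / Real.exp 1 ^ 2 * (2 - 0 + 0))) :=
    (hX.div_const _).mul ((tendsto_const_nhds.sub h2).add h3)
  have hlim : (1 / Real.exp 1 ^ 2 * (2 - 0 + 0) : ℝ) = 2 / Real.exp 1 ^ 2 := by ring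
  rw [hlim] at hF
  apply hF.congr'
  filter_upwards [eventually_ge_atTop 3] with k hk
  have hk3 : (3:ℝ) ≤ (k:ℝ) := by exact_mod_cast hk
  have hkpos : (0:ℝ) < k := by linarith
  have hg1 : (1:ℝ) ≤ gfun k := one_le_gfun hk
  have hgpos : (0:ℝ) < gfun k := by linarith
  have hX_eq : gfun k ^ (1 / (k:ℝ)) = Real.exp (Real.log (gfun k) / (k:ℝ)) := by
    rw [Real.rpow_def_of_pos hgpos, mul_one_div]
  have hlogk : 0 < Real.log k := Real.log_pos (by linarith)
  have hepos : (0:ℝ) < Real.exp 1 := Real.exp_pos 1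
  have hmpos : 0 < mfun k := by
    unfold mfun; positivity
  have hlogm : Real.log (mfun k) = 2 * Real.log k - 2 + Real.log (gfun k) / (k:ℝ) := by
    unfold mfun
    rw [Real.log_mul (by positivity) (by positivity), hX_eq, Real.log_exp, Real.log_pow,
      Real.log_div (by positivity) (by positivity), Real.log_exp]
    push_cast; ring
  rw [hlogm]
  unfold mfun
  rw [hX_eq]
  field_simp
lemma tendsto_ebarfun : Tendsto ebarfun atTop (𝓝 (Real.exp 1 ^ 2 / 2)) := by
  have hk2 : Tendsto (fun k : ℕ => (k:ℝ)^2) atTop atTop :=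
    (tendsto_pow_atTop (by norm_num)).comp (tendsto_natCast_atTop_atTop (R := ℝ))
  have h1 : Tendsto (fun k : ℕ => 2 / (k:ℝ)^2) atTop (𝓝 0) :=
    tendsto_const_nhds.div_atTop hk2
  have hden : Tendsto (fun k : ℕ => 2 / Real.exp 1 ^ 2 - 2 / (k:ℝ)^2) atTop
      (𝓝 (2 / Real.exp 1 ^ 2)) := by
    have := tendsto_const_nhds.sub h1 (f := fun _ : ℕ => 2 / Real.exp 1 ^ 2)
    simpa using this
  have hne : (2 / Real.exp 1 ^ 2 : ℝ) ≠ 0 := by positivity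
  have hmain : Tendsto (fun k : ℕ => 1 / (2 / Real.exp 1 ^ 2 - 2 / (k:ℝ)^2)) atTop
      (𝓝 (1 / (2 / Real.exp 1 ^ 2))) := tendsto_const_nhds.div hden hne
  have h136 : Tendsto (fun k : ℕ => 136 / (k:ℝ)) atTop (𝓝 0) :=
    tendsto_const_nhds.div_atTop (tendsto_natCast_atTop_atTop (R := ℝ))
  have hsum := hmain.add h136
  have hlim : (1 / (2 / Real.exp 1 ^ 2) + 0 : ℝ) = Real.exp 1 ^ 2 / 2 := by
    rw [one_div_div]; ring
  rw [hlim] at hsum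
  apply hsum.congr'
  filter_upwards [eventually_ge_atTop 3] with k hk
  have hk3 : (3:ℝ) ≤ (k:ℝ) := by exact_mod_cast hk
  have he2 : Real.exp 1 ^ 2 < 9 := by nlinarith [Real.exp_one_lt_d9, Real.exp_pos 1]
  have hpos : 0 < (k:ℝ)^2 / Real.exp 1 ^ 2 - 1 := by
    rw [sub_pos, lt_div_iff₀ (by positivity)]
    nlinarith
  have hepos : (0:ℝ) < Real.exp 1 := Real.exp_pos 1
  unfold ebarfun
  have hkne : (k:ℝ) ≠ 0 := by linarith
  congr 1
  field_simp


lemma hsub_of (k : ℕ) (hk : 16 ≤ k) : (k:ℝ)^2/8 + 1 ≤ (k:ℝ)^2 / Real.exp 1 ^ 2 := by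
  have he : Real.exp 1 < 2.7182818286 := Real.exp_one_lt_d9
  have hep : (0:ℝ) < Real.exp 1 := Real.exp_pos 1
  have he2 : Real.exp 1 ^ 2 < 15/2 := by
    have hm := mul_lt_mul'' he he hep.le hep.le
    have hsq : Real.exp 1 * Real.exp 1 = Real.exp 1 ^ 2 := by ring
    linarith only [hm, hsq]
  have hk16 : (16:ℝ) ≤ (k:ℝ) := by exact_mod_cast hk
  have hk2 : (256:ℝ) ≤ (k:ℝ)^2 := by linarith only [hk16, sq_nonneg ((k:ℝ)-16)]
  have hkpos2 : (0:ℝ) < (k:ℝ)^2 := by linarith only [hk2]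
  have h1 : (k:ℝ)^2/(15/2) ≤ (k:ℝ)^2/Real.exp 1^2 :=
    (div_le_div_iff_of_pos_left hkpos2 (by norm_num) (by positivity)).mpr he2.le
  linarith only [h1, hk2]

set_option maxHeartbeats 2000000 in
lemma pointwise (k n : ℕ) (hk : 16 ≤ k)
    (hsub : (k:ℝ)^2/8 + 1 ≤ (k:ℝ)^2 / Real.exp 1 ^ 2)
    (hfloor : n = ⌊mfun k⌋₊)
    (hQ : mfun k * Real.log (mfun k) <
      Real.pi * Real.exp (Real.exp 1 ^ 2 / 2) * ((k:ℝ)^2 * Real.log k) *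
        Real.exp (-(ebarfun k)) / Real.exp 1 ^ 2) :
    (n.factorial : ℝ) * (1 - 1 / (k.factorial : ℝ)) ^ n.choose k < 1 := by
  set K : ℝ := (k : ℝ) with hK
  set E : ℝ := Real.exp 1 with hE
  have hEpos : 0 < E := Real.exp_pos 1
  have hK16 : (16:ℝ) ≤ K := by rw [hK]; exact_mod_cast hk
  have hKpos : 0 < K := by linarith
  have hKsq : (256:ℝ) ≤ K^2 := by linarith only [hK16, sq_nonneg (K-16)]
  have hg1 : 1 ≤ gfun k := one_le_gfun (by omega)
  have hgpos : 0 < gfun k := by linarith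
  have hX1 : 1 ≤ gfun k ^ (1 / K) := by
    have := Real.rpow_le_rpow (by norm_num : (0:ℝ) ≤ 1) hg1 (by positivity : 0 ≤ 1/K)
    simpa using this
  have hm_lb : K^2 / E^2 ≤ mfun k := by
    have h1 : (K/E)^2 * 1 ≤ (K/E)^2 * (gfun k ^ (1/K)) := by
      apply mul_le_mul_of_nonneg_left hX1 (by positivity)
    calc K^2/E^2 = (K/E)^2 * 1 := by rw [div_pow]; ring
      _ ≤ mfun k := h1
  have hm8 : K^2/8 + 1 ≤ mfun k := le_trans hsub hm_lb
  have hmpos : 0 < mfun k := by linarith only [hm8, hKsq]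
  set N : ℝ := (n : ℝ) with hN
  have hNm : N ≤ mfun k := by
    rw [hN, hfloor]; exact Nat.floor_le hmpos.le
  have hmN : mfun k < N + 1 := by
    rw [hN, hfloor]; exact_mod_cast Nat.lt_floor_add_one (mfun k)
  have hN8 : K^2/8 < N := by linarith only [hmN, hm8]
  have hNpos : 0 < N := by linarith only [hN8, hKsq]
  have hN2 : 2 ≤ N := by linarith only [hN8, hKsq]
  have hKN : 2 * K ≤ N := by
    have hq : 0 ≤ K * (K - 16) :=
      mul_nonneg (by linarith only [hK16]) (by linarith only [hK16])
    linarith only [hN8, hq]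
  have hkn : k ≤ n := by
    have h : K ≤ N := by linarith only [hKN, hKpos]
    rw [hK, hN] at h
    exact_mod_cast h
  -- reduce to the key inequality
  have hkf1 : (1:ℝ) ≤ (k.factorial : ℝ) := by exact_mod_cast Nat.one_le_iff_ne_zero.mpr k.factorial_ne_zero
  suffices key : N * Real.log N < (n.choose k : ℝ) / (k.factorial : ℝ) by
    have hbase : 0 ≤ 1 - 1/(k.factorial:ℝ) := by
      rw [sub_nonneg]
      exact div_le_one_of_le₀ hkf1 (by positivity)
    have h1 : 1 - 1/(k.factorial:ℝ) ≤ Real.exp (-(1/(k.factorial:ℝ))) := by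
      linarith only [Real.add_one_le_exp (-(1/(k.factorial:ℝ)))]
    have h2 : (1 - 1/(k.factorial:ℝ)) ^ n.choose k ≤
        Real.exp (-((n.choose k : ℝ)/(k.factorial:ℝ))) := by
      calc (1 - 1/(k.factorial:ℝ)) ^ n.choose k
          ≤ (Real.exp (-(1/(k.factorial:ℝ)))) ^ n.choose k := pow_le_pow_left₀ hbase h1 _
        _ = Real.exp (-((n.choose k : ℝ)/(k.factorial:ℝ))) := by
            rw [← Real.exp_nat_mul]; congr 1; ring
    have h4 : (n.factorial : ℝ) ≤ Real.exp (N * Real.log N) := by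
      have hf : (n.factorial : ℝ) ≤ N ^ n := by rw [hN]; exact_mod_cast Nat.factorial_le_pow n
      have : N ^ n = Real.exp (N * Real.log N) := by
        rw [← Real.exp_log (pow_pos hNpos n), Real.log_pow, hN]
      linarith only [hf, this.le, this.ge]
    calc (n.factorial : ℝ) * (1 - 1 / (k.factorial : ℝ)) ^ n.choose k
        ≤ Real.exp (N * Real.log N) * Real.exp (-((n.choose k : ℝ)/(k.factorial:ℝ))) := by
          apply mul_le_mul h4 h2 (pow_nonneg hbase _) (Real.exp_pos _).le
      _ = Real.exp (N * Real.log N - (n.choose k : ℝ)/(k.factorial:ℝ)) := by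
          rw [← Real.exp_add]; ring_nf
      _ < 1 := Real.exp_lt_one_iff.mpr (by linarith only [key])

  -- key inequality
  have hdesc : (n.descFactorial k : ℝ) = (k.factorial : ℝ) * (n.choose k : ℝ) := by
    exact_mod_cast congrArg (Nat.cast : ℕ → ℝ) (Nat.descFactorial_eq_factorial_mul_choose n k)
  have hCfrac : (n.choose k : ℝ) / (k.factorial : ℝ) = (n.descFactorial k : ℝ) / (k.factorial : ℝ)^2 := by
    rw [hdesc]
    field_simp
  have hdesc_prod : (n.descFactorial k : ℝ) = ∏ i ∈ range k, (N - i) := by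
    rw [Nat.descFactorial_eq_prod_range, Nat.cast_prod]
    apply Finset.prod_congr rfl
    intro i hi
    have hik : i ≤ n := by have := Finset.mem_range.mp hi; omega
    rw [Nat.cast_sub hik, hN]
  have hiK : ∀ i ∈ range k, (i:ℝ) < K := by
    intro i hi
    rw [hK]
    exact_mod_cast Finset.mem_range.mp hi
  have hfac : ∀ i ∈ range k, N * Real.exp (-((i:ℝ)/N) - 2*((i:ℝ)/N)^2) ≤ N - i := by
    intro i hi
    have hiK' := hiK i hi
    have hi0 : (0:ℝ) ≤ i := Nat.cast_nonneg i
    set x : ℝ := (i:ℝ)/N with hx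
    have hx0 : 0 ≤ x := by positivity
    have hxh : x ≤ 1/2 := by
      rw [hx, div_le_iff₀ hNpos]
      linarith only [hiK', hKN]
    have hx1 : x < 1 := by linarith only [hxh]
    have h1x : (0:ℝ) < 1 - x := by linarith only [hx1]
    have haux := aux_exp_le_one_sub hx0 hx1
    have hfrac : x/(1-x) ≤ x + 2*x^2 := by
      rw [div_le_iff₀ h1x]
      have hcube : 0 ≤ x*x*(1-2*x) :=
        mul_nonneg (mul_nonneg hx0 hx0) (by linarith only [hxh])
      linarith only [hcube]
    have h2 : Real.exp (-x - 2*x^2) ≤ 1 - x := by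
      refine le_trans ?_ haux
      apply Real.exp_le_exp.mpr
      linarith only [hfrac]
    have h3 : N * (1 - x) = N - i := by
      rw [hx]
      field_simp
    calc N * Real.exp (-x - 2*x^2) ≤ N * (1-x) :=
          mul_le_mul_of_nonneg_left h2 hNpos.le
      _ = N - i := h3
  have hprod : N^k * Real.exp (∑ i ∈ range k, (-((i:ℝ)/N) - 2*((i:ℝ)/N)^2)) ≤
      ∏ i ∈ range k, (N - i) := by
    have h := Finset.prod_le_prod (s := range k)
      (f := fun i : ℕ => N * Real.exp (-((i:ℝ)/N) - 2*((i:ℝ)/N)^2)) (g := fun i : ℕ => N - (i:ℝ))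
      (fun i _ => by positivity) hfac
    calc N^k * Real.exp (∑ i ∈ range k, (-((i:ℝ)/N) - 2*((i:ℝ)/N)^2))
        = ∏ i ∈ range k, (N * Real.exp (-((i:ℝ)/N) - 2*((i:ℝ)/N)^2)) := by
          rw [Finset.prod_mul_distrib, Finset.prod_const, Finset.card_range, Real.exp_sum]
      _ ≤ _ := h
  have hsum1 : (∑ i ∈ range k, (i:ℝ)) ≤ K^2/2 := by
    have h := Finset.sum_range_id_mul_two k
    have hc := congrArg (fun z : ℕ => (z:ℝ)) h
    push_cast [Nat.cast_sub (show 1 ≤ k by omega)] at hc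
    rw [hK]
    linarith only [hc, (Nat.cast_nonneg k : (0:ℝ) ≤ (k:ℝ))]
  have hsum2 : (∑ i ∈ range k, (i:ℝ)^2) ≤ K^3 := by
    have hb : ∀ i ∈ range k, (i:ℝ)^2 ≤ K^2 := by
      intro i hi
      have hik := hiK i hi
      have hi0 : (0:ℝ) ≤ i := Nat.cast_nonneg i
      have hmm : (i:ℝ) * i ≤ K * K :=
        mul_le_mul hik.le hik.le hi0 (le_trans hi0 hik.le)
      linarith only [hmm]
    calc (∑ i ∈ range k, (i:ℝ)^2) ≤ ∑ _i ∈ range k, K^2 := Finset.sum_le_sum hb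
      _ = K * K^2 := by
          rw [Finset.sum_const, Finset.card_range, nsmul_eq_mul, hK]
      _ ≤ K^3 := le_of_eq (by ring)
  have e1 : ∑ i ∈ range k, ((i:ℝ)/N) = (∑ i ∈ range k, (i:ℝ))/N := (Finset.sum_div _ _ _).symm
  have e2 : ∑ i ∈ range k, (2*((i:ℝ)/N)^2) = 2*(∑ i ∈ range k, (i:ℝ)^2)/N^2 := by
    simp only [div_pow]
    rw [← Finset.mul_sum, ← Finset.sum_div, mul_div_assoc]
  have hsum_eq : ∑ i ∈ range k, (-((i:ℝ)/N) - 2*((i:ℝ)/N)^2)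
      = -((∑ i ∈ range k, (i:ℝ))/N + 2*(∑ i ∈ range k, (i:ℝ)^2)/N^2) := by
    rw [Finset.sum_sub_distrib, Finset.sum_neg_distrib, e1, e2]
    ring
  have hsum_main : -(K^2/(2*N) + 2*K^3/N^2) ≤
      ∑ i ∈ range k, (-((i:ℝ)/N) - 2*((i:ℝ)/N)^2) := by
    rw [hsum_eq]
    have h1 : (∑ i ∈ range k, (i:ℝ))/N ≤ (K^2/2)/N := by gcongr
    have h2 : 2*(∑ i ∈ range k, (i:ℝ)^2)/N^2 ≤ 2*K^3/N^2 := by gcongr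
    have h3 : (K^2/2)/N = K^2/(2*N) := by ring
    linarith only [h1, h2, h3]
  have hden0 : 0 < K^2/E^2 - 1 := by linarith only [hsub, hKsq]
  have hNden : K^2/E^2 - 1 ≤ N := by linarith only [hm_lb, hmN]
  have hB : K^2/(2*N) + 2*K^3/N^2 ≤ K^2/(2*(K^2/E^2 - 1)) + 128/K := by
    have h1 : K^2/(2*N) ≤ K^2/(2*(K^2/E^2-1)) := by
      rw [div_le_div_iff₀ (by positivity) (by linarith only [hden0])]
      linarith only [mul_nonneg (sq_nonneg K) (sub_nonneg.mpr hNden)]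
    have h2 : 2*K^3/N^2 ≤ 128/K := by
      have t2 : (K^2/8)^2 ≤ N^2 := pow_le_pow_left₀ (by positivity) hN8.le 2
      have t3 : 2*K^3/N^2 ≤ 2*K^3/((K^2/8)^2) :=
        (div_le_div_iff_of_pos_left (by positivity) (by positivity)
          (by positivity : (0:ℝ) < (K^2/8)^2)).mpr t2
      have t4 : 2*K^3/((K^2/8)^2) = 128/K := by
        field_simp
        ring
      rw [t4] at t3
      exact t3
    linarith only [h1, h2]
  have hm1pos : 0 < mfun k - 1 := by linarith only [hm8, hKsq]
  have hNk_lb : (mfun k)^k * Real.exp (-(8/K)) ≤ N^k := by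
    have hstep1 : (mfun k - 1)^k ≤ N^k := pow_le_pow_left₀ hm1pos.le (by linarith only [hmN]) k
    have hx : (0:ℝ) ≤ 1/mfun k := by positivity
    have hx1 : 1/mfun k < 1 := by
      rw [div_lt_one hmpos]
      linarith only [hm8, hKsq]
    have hpos1m : 0 < 1 - 1/mfun k := by linarith only [hx1]
    have haux := aux_exp_le_one_sub hx hx1
    have hmne : mfun k ≠ 0 := ne_of_gt hmpos
    have h1m : 1 - 1/mfun k = (mfun k - 1)/mfun k := by field_simp
    have hne2 : (1:ℝ) - 1/mfun k ≠ 0 := ne_of_gt hpos1m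
    have hrw : (1/mfun k)/(1 - 1/mfun k) = 1/(mfun k - 1) := by
      rw [eq_div_iff (ne_of_gt hm1pos)]
      field_simp
    rw [hrw, h1m] at haux
    have hpow : Real.exp (-(1/(mfun k - 1)))^k ≤ ((mfun k - 1)/mfun k)^k :=
      pow_le_pow_left₀ (Real.exp_pos _).le haux k
    have hexp_k : Real.exp (-(1/(mfun k - 1)))^k = Real.exp (-(K/(mfun k - 1))) := by
      rw [← Real.exp_nat_mul, ← hK]
      congr 1
      ring
    have hKm : K/(mfun k - 1) ≤ 8/K := by
      rw [div_le_div_iff₀ hm1pos hKpos]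
      linarith only [hm8]
    have hexp_le : Real.exp (-(8/K)) ≤ Real.exp (-(K/(mfun k - 1))) := by
      apply Real.exp_le_exp.mpr
      linarith only [hKm]
    calc (mfun k)^k * Real.exp (-(8/K))
        ≤ (mfun k)^k * Real.exp (-(K/(mfun k - 1))) :=
          mul_le_mul_of_nonneg_left hexp_le (by positivity)
      _ = (mfun k)^k * Real.exp (-(1/(mfun k - 1)))^k := by rw [hexp_k]
      _ ≤ (mfun k)^k * ((mfun k - 1)/mfun k)^k :=
          mul_le_mul_of_nonneg_left hpow (by positivity)
      _ = (mfun k - 1)^k := by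
          rw [← mul_pow]
          congr 1
          field_simp
      _ ≤ N^k := hstep1
  have hmk : (mfun k)^k = (K/E)^(2*k) * gfun k := by
    unfold mfun
    rw [mul_pow, pow_mul, ← hK, ← hE]
    congr 1
    rw [← Real.rpow_natCast (gfun k ^ (1/K)) k, ← Real.rpow_mul hgpos.le, ← hK,
      one_div_mul_cancel (ne_of_gt hKpos), Real.rpow_one]
  have hfact2 : (k.factorial:ℝ)^2 ≤ E^2 * K * (K/E)^(2*k) := by
    have h := aux_factorial_le (show 1 ≤ k by omega)
    rw [← hK, ← hE] at h
    calc (k.factorial:ℝ)^2 ≤ (E * Real.sqrt K * (K/E)^k)^2 := by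
          apply pow_le_pow_left₀ (by positivity) h 2
      _ = E^2 * K * (K/E)^(2*k) := by
          rw [mul_pow, mul_pow, Real.sq_sqrt hKpos.le, ← pow_mul]
          ring_nf
  have hnum : (K/E)^(2*k) * gfun k * Real.exp (-(ebarfun k)) ≤ (n.descFactorial k : ℝ) := by
    rw [hdesc_prod]
    have hexp2 : Real.exp (-(8/K)) * Real.exp (-(K^2/(2*(K^2/E^2-1)) + 128/K))
        = Real.exp (-(ebarfun k)) := by
      rw [← Real.exp_add]
      congr 1
      unfold ebarfun
      rw [← hK, ← hE]
      ring
    have hA : (K/E)^(2*k) * gfun k * Real.exp (-(ebarfun k))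
        = (mfun k)^k * Real.exp (-(8/K)) * Real.exp (-(K^2/(2*(K^2/E^2-1)) + 128/K)) := by
      calc (K/E)^(2*k) * gfun k * Real.exp (-(ebarfun k))
          = (K/E)^(2*k) * gfun k *
            (Real.exp (-(8/K)) * Real.exp (-(K^2/(2*(K^2/E^2-1)) + 128/K))) := by rw [hexp2]
        _ = (mfun k)^k * Real.exp (-(8/K)) * Real.exp (-(K^2/(2*(K^2/E^2-1)) + 128/K)) := by
            rw [hmk]
            ring
    rw [hA]
    calc (mfun k)^k * Real.exp (-(8/K)) * Real.exp (-(K^2/(2*(K^2/E^2-1)) + 128/K))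
        ≤ N^k * Real.exp (-(K^2/(2*(K^2/E^2-1)) + 128/K)) :=
          mul_le_mul_of_nonneg_right hNk_lb (Real.exp_pos _).le
      _ ≤ N^k * Real.exp (∑ i ∈ range k, (-((i:ℝ)/N) - 2*((i:ℝ)/N)^2)) := by
          apply mul_le_mul_of_nonneg_left ?_ (by positivity)
          apply Real.exp_le_exp.mpr
          linarith only [hsum_main, hB]
      _ ≤ ∏ i ∈ range k, (N - (i:ℝ)) := hprod
  have hfinal : Real.pi * Real.exp (E ^ 2 / 2) * (K^2 * Real.log K) * Real.exp (-(ebarfun k)) / E ^ 2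
      ≤ (n.descFactorial k : ℝ) / (k.factorial : ℝ)^2 := by
    have hdiv := div_le_div₀ (Nat.cast_nonneg (n.descFactorial k)) hnum
      (by positivity : (0:ℝ) < (k.factorial:ℝ)^2) hfact2
    have heq : (K/E)^(2*k) * gfun k * Real.exp (-(ebarfun k)) / (E^2 * K * (K/E)^(2*k))
        = Real.pi * Real.exp (E ^ 2 / 2) * (K^2 * Real.log K) * Real.exp (-(ebarfun k)) / E ^ 2 := by
      have hKE : (K/E)^(2*k) ≠ 0 := by positivity
      unfold gfun
      rw [← hK, ← hE]
      field_simp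
    rw [← heq]
    exact hdiv
  -- conclude
  have hlogN0 : 0 ≤ Real.log N := Real.log_nonneg (by linarith)
  have hlogle : Real.log N ≤ Real.log (mfun k) := Real.log_le_log hNpos hNm
  have hNlogN : N * Real.log N ≤ mfun k * Real.log (mfun k) :=
    mul_le_mul hNm hlogle hlogN0 hmpos.le
  rw [hCfrac]
  calc N * Real.log N ≤ mfun k * Real.log (mfun k) := hNlogN
    _ < Real.pi * Real.exp (E ^ 2 / 2) * (K^2 * Real.log K) * Real.exp (-(ebarfun k)) / E ^ 2 := hQ
    _ ≤ (n.descFactorial k : ℝ) / (k.factorial : ℝ)^2 := hfinal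

/-- For all sufficiently large `k`, with
`n = ⌊(k/e)²·(π·e^{e²/2}·k³·ln k)^{1/k}⌋`, one has `n!·(1 − 1/k!)^{C(n,k)} < 1`. -/
theorem factorial_mul_pow_lt_one :
    ∃ k₀ : ℕ, ∀ k : ℕ, k₀ ≤ k →
      ∀ n : ℕ, n = ⌊((k : ℝ) / Real.exp 1) ^ 2 *
          (Real.pi * Real.exp (Real.exp 1 ^ 2 / 2) * (k : ℝ) ^ 3 * Real.log k)
            ^ (1 / (k : ℝ))⌋₊ →
        (n.factorial : ℝ) * (1 - 1 / (k.factorial : ℝ)) ^ n.choose k < 1 := by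
  have hexp_cancel : Real.exp (Real.exp 1^2/2) * Real.exp (-(Real.exp 1^2/2)) = 1 := by
    rw [← Real.exp_add]
    simp
  have hc1 : Tendsto (fun k : ℕ => Real.pi * Real.exp (Real.exp 1 ^ 2 / 2) / Real.exp 1 ^ 2 *
      Real.exp (-(ebarfun k))) atTop
      (𝓝 (Real.pi * Real.exp (Real.exp 1 ^ 2 / 2) / Real.exp 1 ^ 2 *
        Real.exp (-(Real.exp 1 ^ 2 / 2)))) := by
    apply Tendsto.const_mul
    exact (Real.continuous_exp.tendsto _).comp tendsto_ebarfun.neg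
  have hG := hc1.sub tendsto_mfun_ratio
  have hval : Real.pi * Real.exp (Real.exp 1^2/2) / Real.exp 1^2 * Real.exp (-(Real.exp 1^2/2))
      - 2 / Real.exp 1^2 = (Real.pi - 2) / Real.exp 1^2 := by
    rw [div_mul_eq_mul_div, mul_assoc, hexp_cancel, mul_one]
    ring
  rw [hval] at hG
  have hpos : 0 < (Real.pi - 2) / Real.exp 1^2 :=
    div_pos (by linarith only [Real.pi_gt_three]) (by positivity)
  have hev1 := hG.eventually (eventually_gt_nhds hpos)
  have hev : ∀ᶠ k : ℕ in atTop, ∀ n : ℕ, n = ⌊((k : ℝ) / Real.exp 1) ^ 2 *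
      (Real.pi * Real.exp (Real.exp 1 ^ 2 / 2) * (k : ℝ) ^ 3 * Real.log k)
        ^ (1 / (k : ℝ))⌋₊ →
      (n.factorial : ℝ) * (1 - 1 / (k.factorial : ℝ)) ^ n.choose k < 1 := by
    filter_upwards [hev1, eventually_ge_atTop 16] with k hGk hk16
    intro n hn
    apply pointwise k n hk16 (hsub_of k hk16) hn
    have hk3 : (3:ℝ) ≤ (k:ℝ) := by exact_mod_cast (by omega : 3 ≤ k)
    have hkpos : (0:ℝ) < (k:ℝ) := by linarith only [hk3]
    have hlogk : 0 < Real.log k := Real.log_pos (by linarith only [hk3])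
    have hD : 0 < (k:ℝ)^2 * Real.log k := mul_pos (by positivity) hlogk
    have hlt : mfun k * Real.log (mfun k) / ((k:ℝ)^2 * Real.log k) <
        Real.pi * Real.exp (Real.exp 1^2/2) / Real.exp 1^2 * Real.exp (-(ebarfun k)) := by
      linarith only [hGk]
    have h2 := (div_lt_iff₀ hD).mp hlt
    calc mfun k * Real.log (mfun k)
        < Real.pi * Real.exp (Real.exp 1^2/2) / Real.exp 1^2 * Real.exp (-(ebarfun k)) *
          ((k:ℝ)^2 * Real.log k) := h2
      _ = Real.pi * Real.exp (Real.exp 1 ^ 2 / 2) * ((k:ℝ)^2 * Real.log k) *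
          Real.exp (-(ebarfun k)) / Real.exp 1 ^ 2 := by ring
  obtain ⟨k₀, hk₀⟩ := eventually_atTop.mp hev
  exact ⟨k₀, fun k hk n hn => hk₀ k hk n hn⟩
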